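/- (Needle-in-a-haystack gap.) Let x ∈ [0,1] and let S and B be independent random variables with laws P[S = 0] = P[S = x] = 1/2 and P[B = x] = P[B = 1] = 1/2. Then E[gft(x, S, B)] = 1/2, and for every price p ∈ [0,1] with p ≠ x, E[gft(x, S, B)] − E[gft(p, S, B)] ≥ min(x, 1−x)/4. -/

import Mathlib

open MeasureTheory ProbabilityTheory Set
open scoped ENNReal

lemma integrable_dirac_of_measurable {α : Type*} [MeasurableSpace α] {f : α → ℝ}
    (hf : Measurable f) (a : α) : MeasureTheory.Integrable f (Measure.dirac a) := by
  refine ⟨hf.aestronglyMeasurable, ?_⟩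
  rw [MeasureTheory.HasFiniteIntegral, lintegral_dirac' a hf.enorm]
  exact enorm_lt_top

lemma integrable_quarter_dirac {f : ℝ × ℝ → ℝ} (hf : Measurable f) (z : ℝ × ℝ) :
    MeasureTheory.Integrable f ((1/4 : ℝ≥0∞) • Measure.dirac z) := by
  refine (integrable_smul_measure (by norm_num) (by norm_num)).mpr ?_
  exact integrable_dirac_of_measurable hf z

lemma prod_two_two (a b c d : ℝ) :
    (((1/2 : ℝ≥0∞) • Measure.dirac a + (1/2 : ℝ≥0∞) • Measure.dirac b).prod
        ((1/2 : ℝ≥0∞) • Measure.dirac c + (1/2 : ℝ≥0∞) • Measure.dirac d))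
      = (1/4 : ℝ≥0∞) • Measure.dirac (a, c) + (1/4 : ℝ≥0∞) • Measure.dirac (a, d)
        + (1/4 : ℝ≥0∞) • Measure.dirac (b, c) + (1/4 : ℝ≥0∞) • Measure.dirac (b, d) := by
  haveI h1 : IsProbabilityMeasure ((1/2 : ℝ≥0∞) • Measure.dirac a + (1/2 : ℝ≥0∞) • Measure.dirac b) := by
    constructor
    simp [ENNReal.inv_two_add_inv_two]
  haveI h2 : IsProbabilityMeasure ((1/2 : ℝ≥0∞) • Measure.dirac c + (1/2 : ℝ≥0∞) • Measure.dirac d) := by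
    constructor
    simp [ENNReal.inv_two_add_inv_two]
  refine Measure.prod_eq fun s t hs ht => ?_
  have h14 : (1/2 : ℝ≥0∞) * (1/2) = 1/4 := by
    simp only [one_div]
    rw [← ENNReal.mul_inv (by norm_num) (by norm_num)]
    norm_num
  simp only [Measure.add_apply, Measure.smul_apply, smul_eq_mul,
    Measure.dirac_apply' _ hs, Measure.dirac_apply' _ ht,
    Measure.dirac_apply' _ (hs.prod ht), Set.indicator_apply, Set.mem_prod]
  by_cases h1 : a ∈ s <;> by_cases h2 : b ∈ s <;> by_cases h3 : c ∈ t <;> by_cases h4 : d ∈ t <;>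
    simp [h1, h2, h3, h4, ← h14] <;> ring

lemma integral_four_atoms {f : ℝ × ℝ → ℝ} (hf : Measurable f) (z1 z2 z3 z4 : ℝ × ℝ) :
    (∫ z, f z ∂((1/4 : ℝ≥0∞) • Measure.dirac z1 + (1/4 : ℝ≥0∞) • Measure.dirac z2
        + (1/4 : ℝ≥0∞) • Measure.dirac z3 + (1/4 : ℝ≥0∞) • Measure.dirac z4))
      = (f z1 + f z2 + f z3 + f z4) / 4 := by
  have i1 := integrable_quarter_dirac hf z1
  have i2 := integrable_quarter_dirac hf z2
  have i3 := integrable_quarter_dirac hf z3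
  have i4 := integrable_quarter_dirac hf z4
  rw [integral_add_measure ((i1.add_measure i2).add_measure i3) i4,
    integral_add_measure (i1.add_measure i2) i3, integral_add_measure i1 i2]
  simp only [integral_smul_measure, integral_dirac]
  have : ((1/4 : ℝ≥0∞)).toReal = 1/4 := by
    rw [ENNReal.toReal_div]
    norm_num
  rw [this]
  simp only [smul_eq_mul]
  ring

/-- Gain from trade: `gft p s b = (b - s) · 𝟙{s ≤ p ≤ b}`. -/
noncomputable def gft (p s b : ℝ) : ℝ := if s ≤ p ∧ p ≤ b then b - s else 0

/-- **Needle-in-a-haystack gap.**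
Let `x ∈ [0,1]` and let `S, B` be independent with `P[S = 0] = P[S = x] = 1/2` and
`P[B = x] = P[B = 1] = 1/2`.  Then `E[gft(x,S,B)] = 1/2` and every other price
`p ∈ [0,1]`, `p ≠ x`, is suboptimal by at least `min(x, 1−x)/4`. -/
theorem needle_in_haystack
    {Ω : Type} [MeasurableSpace Ω] (μ : Measure Ω) [IsProbabilityMeasure μ]
    (x : ℝ) (hx : x ∈ Icc (0:ℝ) 1)
    (S B : Ω → ℝ) (hS : Measurable S) (hB : Measurable B)
    (hindep : IndepFun S B μ)
    (hlawS : μ.map S = (1/2 : ℝ≥0∞) • Measure.dirac (0:ℝ) + (1/2 : ℝ≥0∞) • Measure.dirac x)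
    (hlawB : μ.map B = (1/2 : ℝ≥0∞) • Measure.dirac x + (1/2 : ℝ≥0∞) • Measure.dirac (1:ℝ)) :
    (∫ ω, gft x (S ω) (B ω) ∂μ) = 1/2
    ∧ ∀ p ∈ Icc (0:ℝ) 1, p ≠ x →
        (∫ ω, gft x (S ω) (B ω) ∂μ) - (∫ ω, gft p (S ω) (B ω) ∂μ)
          ≥ min x (1 - x) / 4 := by
  obtain ⟨hx0, hx1⟩ := hx
  have hFmeas : ∀ p : ℝ, Measurable (fun z : ℝ × ℝ => gft p z.1 z.2) := by
    intro p
    unfold gft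
    exact Measurable.ite
      ((measurableSet_le measurable_fst measurable_const).inter
        (measurableSet_le measurable_const measurable_snd))
      (measurable_snd.sub measurable_fst) measurable_const
  have key : ∀ p : ℝ, (∫ ω, gft p (S ω) (B ω) ∂μ)
      = (gft p 0 x + gft p 0 1 + gft p x x + gft p x 1) / 4 := by
    intro p
    have hmap : μ.map (fun ω => (S ω, B ω)) = (μ.map S).prod (μ.map B) :=
      (indepFun_iff_map_prod_eq_prod_map_map hS.aemeasurable hB.aemeasurable).mp hindep
    calc (∫ ω, gft p (S ω) (B ω) ∂μ)
        = ∫ z, gft p z.1 z.2 ∂(μ.map (fun ω => (S ω, B ω))) := by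
          rw [integral_map (hS.prodMk hB).aemeasurable (hFmeas p).aestronglyMeasurable]
      _ = (gft p 0 x + gft p 0 1 + gft p x x + gft p x 1) / 4 := by
          rw [hmap, hlawS, hlawB, prod_two_two]
          exact integral_four_atoms (hFmeas p) (0, x) (0, 1) (x, x) (x, 1)
  have hxx : gft x 0 x = x := by simp [gft, hx0]
  have hx01 : gft x 0 1 = 1 := by simp [gft, hx0, hx1]
  have hxxx : gft x x x = 0 := by simp [gft]
  have hxx1 : gft x x 1 = 1 - x := by simp [gft, hx1]
  have hEx : (∫ ω, gft x (S ω) (B ω) ∂μ) = 1/2 := by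
    rw [key x, hxx, hx01, hxxx, hxx1]; ring
  refine ⟨hEx, ?_⟩
  intro p hp hpx
  obtain ⟨hp0, hp1⟩ := hp
  rw [hEx, key p]
  rcases lt_or_gt_of_ne hpx with h | h
  · -- p < x
    have g1 : gft p 0 x = x := by simp [gft, hp0, le_of_lt h]
    have g2 : gft p 0 1 = 1 := by simp [gft, hp0, hp1]
    have g3 : gft p x x = 0 := by simp [gft, not_le.mpr h]
    have g4 : gft p x 1 = 0 := by simp [gft, not_le.mpr h]
    rw [g1, g2, g3, g4]
    have : min x (1 - x) ≤ 1 - x := min_le_right _ _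
    linarith
  · -- x < p
    have g1 : gft p 0 x = 0 := by simp [gft, not_le.mpr h, hp0]
    have g2 : gft p 0 1 = 1 := by simp [gft, hp0, hp1]
    have g3 : gft p x x = 0 := by simp [gft, not_le.mpr h, le_of_lt h]
    have g4 : gft p x 1 = 1 - x := by simp [gft, le_of_lt h, hp1]
    rw [g1, g2, g3, g4]
    have : min x (1 - x) ≤ x := min_le_left _ _
    linarith
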